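/- For a compact metric space (X,d), let X^{(1)} be the set of orbits of X under the isometry group of X, with canonical projection π: X → X^{(1)}, and let d^{(1)} be the greatest pseudometric on X^{(1)} making π nonexpansive. Then d^{(1)} is a metric, i.e., d^{(1)}(π(x), π(y)) = 0 implies that x and y lie in the same orbit. -/

import Mathlib

/-- The greatest pseudometric d⁽¹⁾ on the orbit space X⁽¹⁾ making the projection
nonexpansive, expressed on representatives: d⁽¹⁾(π x, π y) is the supremum of
|f x - f y| over all 1-Lipschitz functions f : X → ℝ invariant under every surjective
isometry of X (such f are exactly those of the form g ∘ π with g ∘ π nonexpansive). -/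
noncomputable def orbitDist {X : Type*} [MetricSpace X] (x y : X) : ℝ :=
  sSup {r : ℝ | ∃ f : X → ℝ, LipschitzWith 1 f ∧
    (∀ (Φ : X ≃ᵢ X) (a : X), f (Φ a) = f a) ∧ r = |f x - f y|}

open Metric BoundedContinuousFunction in
/-- An isometry of a compact metric space into itself is surjective. -/
lemma isometry_surjective_of_compact {X : Type*} [MetricSpace X] [CompactSpace X]
    {g : X → X} (hg : Isometry g) : Function.Surjective g := by
  intro z
  by_contra hz
  push_neg at hz
  have hzr : z ∉ Set.range g := by rintro ⟨w, rfl⟩; exact hz w rfl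
  have hclosed : IsClosed (Set.range g) := (isCompact_range hg.continuous).isClosed
  have hne : (Set.range g).Nonempty := ⟨g z, z, rfl⟩
  have hεpos : 0 < infDist z (Set.range g) := by
    rcases lt_or_eq_of_le (infDist_nonneg (s := Set.range g) (x := z)) with h' | h'
    · exact h'
    · exact absurd ((hclosed.mem_iff_infDist_zero hne).2 h'.symm) hzr
  set ε := infDist z (Set.range g) with hε
  -- the sequence of iterates has a Cauchy subsequence
  obtain ⟨a, -, φ, hφ, hlim⟩ := isCompact_univ.tendsto_subseq
    (x := fun n => g^[n] z) (fun n => Set.mem_univ _)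
  have hcauchy := hlim.cauchySeq
  rw [Metric.cauchySeq_iff] at hcauchy
  obtain ⟨N, hN⟩ := hcauchy ε hεpos
  have hlt := hN (N + 1) (by omega) N (le_refl N)
  have hmn : φ N < φ (N + 1) := hφ (by omega)
  -- distance between iterates
  have hiter : ∀ n m : ℕ, dist (g^[n + m] z) (g^[n] z) = dist (g^[m] z) z := by
    intro n m
    rw [Function.iterate_add_apply]
    have hgi : ∀ k : ℕ, Isometry (g^[k]) := by
      intro k
      induction k with
      | zero => simpa using isometry_id
      | succ k ih => rw [Function.iterate_succ']; exact hg.comp ih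
    exact (hgi n).dist_eq _ _
  obtain ⟨k, hk⟩ : ∃ k : ℕ, φ (N + 1) = φ N + (k + 1) :=
    ⟨φ (N + 1) - φ N - 1, by omega⟩
  have hmem : g^[k + 1] z ∈ Set.range g := ⟨g^[k] z, (Function.iterate_succ_apply' g k z).symm⟩
  have : ε ≤ dist (g^[φ (N + 1)] z) (g^[φ N] z) := by
    rw [hk, hiter, dist_comm]
    exact infDist_le_dist_of_mem hmem
  exact absurd (lt_of_le_of_lt this hlt) (lt_irrefl _)

open Metric BoundedContinuousFunction in
/-- A point in the closure of an orbit of the isometry group of a compact metric space is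
reached by an isometry of the space into itself. -/
lemma exists_isometry_of_mem_closure_orbit {X : Type*} [MetricSpace X] [CompactSpace X]
    {x y : X} (hy : y ∈ closure (Set.range fun Φ : X ≃ᵢ X => Φ x)) :
    ∃ g : X → X, Isometry g ∧ g x = y := by
  -- the set of isometries inside the bounded continuous functions
  set A : Set (X →ᵇ X) := {f | Isometry ⇑f} with hA
  have hclosed : IsClosed A := by
    have : A = ⋂ (a : X) (b : X), {f : X →ᵇ X | dist (f a) (f b) = dist a b} := by
      ext f
      simp only [hA, Set.mem_setOf_eq, Set.mem_iInter, isometry_iff_dist_eq]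
    rw [this]
    exact isClosed_iInter fun a => isClosed_iInter fun b =>
      isClosed_eq ((continuous_eval_const a).dist (continuous_eval_const b)) continuous_const
  have hequi : Equicontinuous ((↑) : A → X → X) := by
    apply Metric.equicontinuous_of_continuity_modulus (fun d => d) Filter.tendsto_id
    intro a b i
    exact le_of_eq (i.2.dist_eq a b)
  have hcompact : IsCompact A := arzela_ascoli₁ A hclosed hequi
  -- a sequence of isometries approaching y at x
  obtain ⟨u, hu, hulim⟩ := mem_closure_iff_seq_limit.1 hy
  choose Φ hΦ using hu
  set f : ℕ → X →ᵇ X := fun n => mkOfCompact ⟨⇑(Φ n), (Φ n).continuous⟩ with hf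
  have hfA : ∀ n, f n ∈ A := fun n => (Φ n).isometry
  obtain ⟨g, hgA, ψ, hψ, hglim⟩ := hcompact.tendsto_subseq hfA
  refine ⟨⇑g, hgA, ?_⟩
  have h1 : Filter.Tendsto (fun n => (f (ψ n)) x) Filter.atTop (nhds (g x)) :=
    ((continuous_eval_const (F := X →ᵇ X) x).tendsto g).comp hglim
  have h2 : Filter.Tendsto (fun n => (f (ψ n)) x) Filter.atTop (nhds y) := by
    have : (fun n => (f (ψ n)) x) = fun n => u (ψ n) := by
      funext n; exact hΦ (ψ n)
    rw [this]
    exact hulim.comp hψ.tendsto_atTop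
  exact tendsto_nhds_unique h1 h2

/-- For a compact metric space X, the greatest pseudometric d⁽¹⁾ on the
orbit space X⁽¹⁾ making the canonical projection nonexpansive is a metric:
d⁽¹⁾(π x, π y) = 0 implies that x and y lie in the same orbit of the isometry group. -/
theorem orbitDist_eq_zero_iff_sameOrbit {X : Type*} [MetricSpace X] [CompactSpace X]
    (x y : X) (h : orbitDist x y = 0) :
    ∃ Φ : X ≃ᵢ X, Φ x = y := by
  classical
  set S : Set X := Set.range fun Φ : X ≃ᵢ X => Φ x with hS
  -- the distance-to-orbit function is 1-Lipschitz and isometry invariant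
  set F : X → ℝ := fun z => Metric.infDist z S with hF
  have hFlip : LipschitzWith 1 F := Metric.lipschitz_infDist_pt S
  have hSinv : ∀ Ψ : X ≃ᵢ X, Ψ '' S = S := by
    intro Ψ
    ext z
    constructor
    · rintro ⟨-, ⟨Φ, rfl⟩, rfl⟩
      exact ⟨Φ.trans Ψ, rfl⟩
    · rintro ⟨Φ, rfl⟩
      exact ⟨Ψ.symm (Φ x), ⟨Φ.trans Ψ.symm, rfl⟩, Ψ.apply_symm_apply _⟩
  have hFinv : ∀ (Ψ : X ≃ᵢ X) (a : X), F (Ψ a) = F a := by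
    intro Ψ a
    have := Metric.infDist_image (Φ := ⇑Ψ) (x := a) (t := S) Ψ.isometry
    rw [hSinv Ψ] at this
    exact this
  -- the defining set of orbitDist is bounded above and contains |F x - F y|
  have hbdd : BddAbove {r : ℝ | ∃ f : X → ℝ, LipschitzWith 1 f ∧
      (∀ (Φ : X ≃ᵢ X) (a : X), f (Φ a) = f a) ∧ r = |f x - f y|} := by
    refine ⟨dist x y, ?_⟩
    rintro r ⟨f, hf, -, rfl⟩
    have := hf.dist_le_mul x y
    rwa [Real.dist_eq, NNReal.coe_one, one_mul] at this
  have hmem : |F x - F y| ∈ {r : ℝ | ∃ f : X → ℝ, LipschitzWith 1 f ∧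
      (∀ (Φ : X ≃ᵢ X) (a : X), f (Φ a) = f a) ∧ r = |f x - f y|} :=
    ⟨F, hFlip, hFinv, rfl⟩
  have hle : |F x - F y| ≤ 0 := by
    rw [← h]
    exact le_csSup hbdd hmem
  have hFx : F x = 0 := Metric.infDist_zero_of_mem (Set.mem_range.2 ⟨IsometryEquiv.refl X, rfl⟩)
  have hFy : F y = 0 := by
    have := abs_nonneg (F x - F y)
    have h0 : |F x - F y| = 0 := le_antisymm hle this
    have := abs_eq_zero.1 h0
    linarith
  -- y is in the closure of the orbit of x
  have hyc : y ∈ closure S :=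
    (Metric.mem_closure_iff_infDist_zero ⟨x, Set.mem_range.2 ⟨IsometryEquiv.refl X, rfl⟩⟩).2 hFy
  obtain ⟨g, hg, hgx⟩ := exists_isometry_of_mem_closure_orbit hyc
  have hsurj : Function.Surjective g := isometry_surjective_of_compact hg
  refine ⟨IsometryEquiv.mk (Equiv.ofBijective g ⟨hg.injective, hsurj⟩) hg, ?_⟩
  exact hgx
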